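/- Let 0 < ρ < 1 and let D be a 2×2 matrix with diagonal entries d₁, d₂ > 0 and off-diagonal entries θ√(d₁d₂), where θ = (√((1-ρ²)² + 4ρ²d₁d₂) - (1-ρ²)) / (2ρ√(d₁d₂)). Then det D = 2d₁d₂ / β(d₁,d₂), where β(d₁,d₂) = 1 + √(1 + 4ρ²d₁d₂/(1-ρ²)²). -/

import Mathlib

open Matrix

theorem stmt2 (ρ d₁ d₂ θ β : ℝ) (hρ : 0 < ρ) (hρ1 : ρ < 1)
    (hd₁ : 0 < d₁) (hd₂ : 0 < d₂)
    (hθ : θ = (Real.sqrt ((1 - ρ ^ 2) ^ 2 + 4 * ρ ^ 2 * d₁ * d₂) - (1 - ρ ^ 2)) /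
      (2 * ρ * Real.sqrt (d₁ * d₂)))
    (hβ : β = 1 + Real.sqrt (1 + 4 * ρ ^ 2 * d₁ * d₂ / (1 - ρ ^ 2) ^ 2))
    (D : Matrix (Fin 2) (Fin 2) ℝ)
    (hD : D = !![d₁, θ * Real.sqrt (d₁ * d₂); θ * Real.sqrt (d₁ * d₂), d₂]) :
    D.det = 2 * d₁ * d₂ / β := by
  have hA : (0:ℝ) < 1 - ρ ^ 2 := by nlinarith
  have hP : (0:ℝ) < d₁ * d₂ := mul_pos hd₁ hd₂
  have hs : Real.sqrt (d₁ * d₂) ^ 2 = d₁ * d₂ := Real.sq_sqrt hP.le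
  have hspos : 0 < Real.sqrt (d₁ * d₂) := Real.sqrt_pos.2 hP
  set R := Real.sqrt ((1 - ρ ^ 2) ^ 2 + 4 * ρ ^ 2 * d₁ * d₂) with hRdef
  have hR2 : R ^ 2 = (1 - ρ ^ 2) ^ 2 + 4 * ρ ^ 2 * d₁ * d₂ := by
    apply Real.sq_sqrt; positivity
  have hRpos : 0 < R := Real.sqrt_pos.2 (by positivity)
  have hβR : β = ((1 - ρ ^ 2) + R) / (1 - ρ ^ 2) := by
    have : (1 + 4 * ρ ^ 2 * d₁ * d₂ / (1 - ρ ^ 2) ^ 2) = (R / (1 - ρ ^ 2)) ^ 2 := by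
      field_simp
      linarith [hR2]
    rw [hβ, this, Real.sqrt_sq (by positivity)]
    field_simp
  have hβpos : 0 < (1 - ρ ^ 2) + R := by linarith
  have hts : θ * Real.sqrt (d₁ * d₂) = (R - (1 - ρ ^ 2)) / (2 * ρ) := by
    rw [hθ]
    field_simp
  rw [hD, Matrix.det_fin_two_of, hts, hβR]
  rw [eq_div_iff (by positivity)]
  field_simp
  linear_combination ((1 - ρ ^ 2) - R) * hR2
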